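/- Let S be a finite commutative ring with identity of characteristic 2 and let C be a self-dual code of length 2n over S generated by the matrix G = [ I_n | A ] in standard form. For each i let rᵢ be the sum of the entries of the i-th row of A. Let c be a unit in S with c² = 1, let X = (x₁, …, x_n) ∈ Sⁿ satisfy ⟨X,X⟩ = 1 + n·1, and set yᵢ = xᵢ + rᵢ. Then the (n+1)×(2n+2) matrix G* whose first row is (1, 0, x₁, …, x_n, 1, …, 1) (with n trailing ones) and whose (i+1)-st row is (yᵢ, c·yᵢ, eᵢ, Aᵢ) — where eᵢ is the i-th row of I_n and Aᵢ is the i-th row of A — generates a self-dual code C* over S of length 2n+2. -/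

import Mathlib

noncomputable section

/-- The dual of a code `C ⊆ Sⁿ` with respect to the Euclidean inner product. -/
def dualSet {S ι : Type*} [CommRing S] [Fintype ι] (C : Set (ι → S)) : Set (ι → S) :=
  {x | ∀ y ∈ C, ∑ i, x i * y i = 0}

lemma mem_dualSet_span_iff {S ι κ : Type*} [CommRing S] [Fintype ι] (v : κ → ι → S)
    (x : ι → S) :
    x ∈ dualSet ((Submodule.span S (Set.range v) : Submodule S (ι → S)) : Set (ι → S)) ↔
      ∀ a, ∑ i, x i * v a i = 0 := by
  constructor
  · intro h a
    exact h _ (Submodule.subset_span ⟨a, rfl⟩)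
  · intro h y hy
    induction hy using Submodule.span_induction with
    | mem z hz => obtain ⟨a, rfl⟩ := hz; exact h a
    | zero => simp
    | add p q _ _ hp hq => simp [mul_add, Finset.sum_add_distrib, hp, hq]
    | smul t p _ hp => simp [Pi.smul_apply, smul_eq_mul, mul_left_comm, ← Finset.mul_sum, hp]

/-- Extension theorem in standard form: let `S` be a finite commutative ring of
characteristic 2, `C` a self-dual code of length `2n` over `S` generated by
`G = [ Iₙ | A ]`, `rᵢ` the sum of the entries of the `i`-th row of `A`, `c` a unit of
`S` with `c² = 1`, and `X = (x₁, …, xₙ) ∈ Sⁿ` with `⟨X, X⟩ = 1 + n·1`.  With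
`yᵢ = xᵢ + rᵢ`, the `(n+1) × (2n+2)` matrix `G*` whose first row is
`(1, 0, x₁, …, xₙ, 1, …, 1)` and whose remaining rows are `(yᵢ, c yᵢ, eᵢ, Aᵢ)`
generates a self-dual code `C*` of length `2n + 2` over `S`. -/
theorem extension_self_dual_standard_form
    {S : Type*} [CommRing S] [Fintype S] (hchar : (1 : S) + 1 = 0)
    (n : ℕ) (A : Matrix (Fin n) (Fin n) S)
    (C : Submodule S ((Fin n ⊕ Fin n) → S))
    (hCG : C = Submodule.span S (Set.range fun i : Fin n =>
      Sum.elim (fun j => if i = j then (1 : S) else 0) (A i)))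
    (hC : (C : Set ((Fin n ⊕ Fin n) → S)) = dualSet (C : Set ((Fin n ⊕ Fin n) → S)))
    (c : S) (hc : IsUnit c) (hc2 : c ^ 2 = 1)
    (X : Fin n → S) (hX : ∑ i, X i * X i = 1 + (n : S)) :
    letI r : Fin n → S := fun i => ∑ j, A i j
    letI y : Fin n → S := fun i => X i + r i
    letI Gstar : Option (Fin n) → (Fin 2 ⊕ (Fin n ⊕ Fin n)) → S := fun row =>
      Option.elim row
        (Sum.elim ![1, 0] (Sum.elim X fun _ => 1))
        (fun i => Sum.elim ![y i, c * y i]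
          (Sum.elim (fun j => if i = j then (1 : S) else 0) (A i)))
    letI Cstar : Submodule S ((Fin 2 ⊕ (Fin n ⊕ Fin n)) → S) :=
      Submodule.span S (Set.range Gstar)
    (Cstar : Set ((Fin 2 ⊕ (Fin n ⊕ Fin n)) → S)) =
      dualSet (Cstar : Set ((Fin 2 ⊕ (Fin n ⊕ Fin n)) → S)) := by
  beta_reduce
  set y : Fin n → S := fun i => X i + ∑ j, A i j with hy
  set G : Option (Fin n) → (Fin 2 ⊕ (Fin n ⊕ Fin n)) → S := fun row =>
      Option.elim row
        (Sum.elim ![1, 0] (Sum.elim X fun _ => 1))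
        (fun i => Sum.elim ![y i, c * y i]
          (Sum.elim (fun j => if i = j then (1 : S) else 0) (A i))) with hG
  set g : Fin n → ((Fin n ⊕ Fin n) → S) :=
    fun i => Sum.elim (fun j => if i = j then (1 : S) else 0) (A i) with hg
  -- basic facts about A
  have hgC : ∀ i, g i ∈ C := fun i => by rw [hCG]; exact Submodule.subset_span ⟨i, rfl⟩
  have hAAT : ∀ i j, ∑ k, A i k * A j k = if i = j then 1 else 0 := by
    intro i j
    have h1 : g i ∈ dualSet (C : Set _) := hC ▸ hgC i
    have h2 := h1 (g j) (hgC j)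
    rw [Fintype.sum_sum_type] at h2
    simp only [hg, Sum.elim_inl, Sum.elim_inr, ite_mul, one_mul, zero_mul,
      Finset.sum_ite_eq, Finset.mem_univ, if_true] at h2
    rcases eq_or_ne i j with h | h
    · subst h; simp only [eq_self_iff_true, if_true] at h2 ⊢; linear_combination h2 - hchar
    · rw [if_neg (fun e => h e.symm)] at h2
      rw [if_neg h]
      linear_combination h2
  have hA1 : A * A.transpose = 1 := by
    ext i j
    simp [Matrix.mul_apply, Matrix.transpose_apply, Matrix.one_apply, hAAT]
  have hA2 : A.transpose * A = 1 := mul_eq_one_comm.mp hA1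
  have hATA : ∀ k l, ∑ i, A i k * A i l = if k = l then 1 else 0 := by
    intro k l
    have h3 := Matrix.ext_iff.mpr hA2 k l
    simpa [Matrix.mul_apply, Matrix.transpose_apply, Matrix.one_apply] using h3
  have hrA : ∀ k, ∑ i, (∑ j, A i j) * A i k = 1 := by
    intro k
    calc ∑ i, (∑ j, A i j) * A i k = ∑ j, ∑ i, A i j * A i k := by
          rw [Finset.sum_comm]; simp [Finset.sum_mul]
      _ = 1 := by simp [hATA]
  -- orthogonality of the rows of G
  have horth : ∀ p q : Option (Fin n), ∑ idx, G p idx * G q idx = 0 := by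
    rintro (_ | i) (_ | j)
    · simp only [hG, Option.elim, Fintype.sum_sum_type, Fin.sum_univ_two,
        Sum.elim_inl, Sum.elim_inr, Matrix.cons_val_zero, Matrix.cons_val_one,
        Matrix.head_cons, mul_one, mul_zero, one_mul]
      rw [hX]
      simp only [Finset.sum_const, Finset.card_univ, Fintype.card_fin, nsmul_eq_mul, mul_one]
      linear_combination (1 + (n : S)) * hchar
    · simp only [hG, Option.elim, Fintype.sum_sum_type, Fin.sum_univ_two,
        Sum.elim_inl, Sum.elim_inr, Matrix.cons_val_zero, Matrix.cons_val_one,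
        Matrix.head_cons, mul_one, mul_zero, one_mul, mul_ite, ite_mul, zero_mul,
        Finset.sum_ite_eq, Finset.mem_univ, if_true]
      simp only [hy]
      linear_combination (X j + ∑ x : Fin n, A j x) * hchar
    · simp only [hG, Option.elim, Fintype.sum_sum_type, Fin.sum_univ_two,
        Sum.elim_inl, Sum.elim_inr, Matrix.cons_val_zero, Matrix.cons_val_one,
        Matrix.head_cons, mul_one, mul_zero, one_mul, mul_ite, ite_mul, zero_mul,
        Finset.sum_ite_eq, Finset.mem_univ, if_true]
      simp only [hy]
      linear_combination (X i + ∑ x : Fin n, A i x) * hchar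
    · simp only [hG, Option.elim, Fintype.sum_sum_type, Fin.sum_univ_two,
        Sum.elim_inl, Sum.elim_inr, Matrix.cons_val_zero, Matrix.cons_val_one,
        Matrix.head_cons, mul_one, mul_zero, one_mul, mul_ite, ite_mul, zero_mul,
        Finset.sum_ite_eq, Finset.mem_univ, if_true]
      rw [hAAT i j]
      simp only [hy]
      linear_combination ((X i + ∑ x : Fin n, A i x) * (X j + ∑ x : Fin n, A j x)) * hc2
        + ((X i + ∑ x : Fin n, A i x) * (X j + ∑ x : Fin n, A j x)
            + (if i = j then (1:S) else 0)) * hchar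
  have hfwd : ∀ w, w ∈ Submodule.span S (Set.range G) →
      ∀ a, ∑ i, w i * G a i = 0 := by
    intro w hw
    induction hw using Submodule.span_induction with
    | mem p hp => obtain ⟨q, rfl⟩ := hp; exact fun a => horth q a
    | zero => intro a; simp
    | add p q _ _ hp hq =>
        intro a
        simp only [Pi.add_apply, add_mul, Finset.sum_add_distrib, hp a, hq a, add_zero]
    | smul t p _ hp =>
        intro a
        simp only [Pi.smul_apply, smul_eq_mul, mul_assoc, ← Finset.mul_sum, hp a, mul_zero]
  apply Set.Subset.antisymm
  · -- span ⊆ dual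
    intro w hw
    exact (mem_dualSet_span_iff G w).mpr (hfwd w hw)
  · -- dual ⊆ span
    intro z hz
    have hzc : ∀ p, ∑ idx, z idx * G p idx = 0 := (mem_dualSet_span_iff G z).mp hz
    set m : (Fin 2 ⊕ (Fin n ⊕ Fin n)) → S :=
      fun idx => z idx + ∑ i, z (Sum.inr (Sum.inl i)) * G (some i) idx with hmdef
    have hm : ∀ p, ∑ idx, m idx * G p idx = 0 := by
      intro p
      simp only [hmdef]
      calc ∑ idx, (z idx + ∑ i, z (Sum.inr (Sum.inl i)) * G (some i) idx) * G p idx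
          = (∑ idx, z idx * G p idx)
            + ∑ idx, ∑ i, z (Sum.inr (Sum.inl i)) * G (some i) idx * G p idx := by
            simp only [add_mul, Finset.sum_add_distrib, Finset.sum_mul]
        _ = (∑ idx, z idx * G p idx)
            + ∑ i, z (Sum.inr (Sum.inl i)) * ∑ idx, G (some i) idx * G p idx := by
            rw [Finset.sum_comm]
            simp only [Finset.mul_sum, mul_assoc]
        _ = 0 := by rw [hzc p]; simp [horth]
    have hm0 : m (Sum.inl 0) = z (Sum.inl 0) + ∑ i, z (Sum.inr (Sum.inl i)) * y i := by
      simp [hmdef, hG]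
    have hm1 : m (Sum.inl 1) = z (Sum.inl 1) + ∑ i, z (Sum.inr (Sum.inl i)) * (c * y i) := by
      simp [hmdef, hG]
    have hmmid : ∀ j, m (Sum.inr (Sum.inl j)) = 0 := by
      intro j
      simp only [hmdef, hG, Option.elim, Sum.elim_inl, Sum.elim_inr, mul_ite, mul_one,
        mul_zero, Finset.sum_ite_eq', Finset.mem_univ, if_true]
      linear_combination z (Sum.inr (Sum.inl j)) * hchar
    have hmw : ∀ k, m (Sum.inr (Sum.inr k))
        = z (Sum.inr (Sum.inr k)) + ∑ i, z (Sum.inr (Sum.inl i)) * A i k := by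
      intro k
      simp [hmdef, hG]
    set s : S := m (Sum.inl 0) + m (Sum.inl 1) * c with hs
    have hcon0 : m (Sum.inl 0) + ∑ k, m (Sum.inr (Sum.inr k)) = 0 := by
      have e := hm none
      simp only [hG, Option.elim, Fintype.sum_sum_type, Fin.sum_univ_two, Sum.elim_inl,
        Sum.elim_inr, Matrix.cons_val_zero, Matrix.cons_val_one, Matrix.head_cons,
        mul_one, mul_zero, one_mul] at e
      simpa [hmmid] using e
    have hconi : ∀ i, m (Sum.inl 0) * y i + m (Sum.inl 1) * (c * y i)
        + ∑ k, m (Sum.inr (Sum.inr k)) * A i k = 0 := by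
      intro i
      have e := hm (some i)
      simp only [hG, Option.elim, Fintype.sum_sum_type, Fin.sum_univ_two, Sum.elim_inl,
        Sum.elim_inr, Matrix.cons_val_zero, Matrix.cons_val_one, Matrix.head_cons,
        mul_one, mul_zero, one_mul, mul_ite, ite_mul, zero_mul, Finset.sum_ite_eq,
        Finset.sum_ite_eq', Finset.mem_univ, if_true] at e
      simpa [hmmid, add_assoc] using e
    have hAw : ∀ i, ∑ k, m (Sum.inr (Sum.inr k)) * A i k = s * y i := by
      intro i
      linear_combination hconi i + y i * hs - s * y i * hchar
    -- the auxiliary codeword in C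
    have htC : (Sum.elim (fun i => s * y i) (fun k => m (Sum.inr (Sum.inr k)))
        : (Fin n ⊕ Fin n) → S) ∈ C := by
      rw [← SetLike.mem_coe, hC, hCG]
      rw [mem_dualSet_span_iff]
      intro a
      rw [Fintype.sum_sum_type]
      simp only [hg, Sum.elim_inl, Sum.elim_inr, ite_mul, mul_ite, mul_one, mul_zero,
        one_mul, zero_mul, Finset.sum_ite_eq, Finset.sum_ite_eq', Finset.mem_univ, if_true]
      linear_combination hAw a + s * y a * hchar
    have ht2 : (Sum.elim (fun i => s * y i) (fun k => m (Sum.inr (Sum.inr k)))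
        : (Fin n ⊕ Fin n) → S) ∈ Submodule.span S (Set.range g) := hCG ▸ htC
    obtain ⟨lam, hlam⟩ := (Submodule.mem_span_range_iff_exists_fun S).mp ht2
    have hlam1 : ∀ a, lam a = s * y a := by
      intro a
      have e := congrFun hlam (Sum.inl a)
      simp only [Finset.sum_apply, Pi.smul_apply, smul_eq_mul, hg, Sum.elim_inl, mul_ite,
        mul_one, mul_zero, Finset.sum_ite_eq', Finset.mem_univ, if_true] at e
      exact e
    have hw : ∀ k, m (Sum.inr (Sum.inr k)) = s * (∑ i, X i * A i k) + s := by
      intro k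
      have e := congrFun hlam (Sum.inr k)
      simp only [Finset.sum_apply, Pi.smul_apply, smul_eq_mul, hg, Sum.elim_inr] at e
      rw [← e]
      calc ∑ i, lam i * A i k
          = ∑ i, (s * (X i * A i k) + s * ((∑ j, A i j) * A i k)) := by
            refine Finset.sum_congr rfl fun i _ => ?_
            rw [hlam1 i]
            simp only [hy]
            ring
        _ = s * (∑ i, X i * A i k) + s * ∑ i, (∑ j, A i j) * A i k := by
            rw [Finset.sum_add_distrib, Finset.mul_sum, Finset.mul_sum]
        _ = s * (∑ i, X i * A i k) + s := by rw [hrA k, mul_one]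
    have hb' : m (Sum.inl 0) = s * (∑ i, X i * ∑ j, A i j) + s * n := by
      have e1 : ∑ k, m (Sum.inr (Sum.inr k)) = s * (∑ i, X i * ∑ j, A i j) + s * n := by
        calc ∑ k, m (Sum.inr (Sum.inr k)) = ∑ k, (s * (∑ i, X i * A i k) + s) :=
              Finset.sum_congr rfl fun k _ => hw k
          _ = s * (∑ k, ∑ i, X i * A i k) + s * n := by
              rw [Finset.sum_add_distrib, ← Finset.mul_sum]
              simp [Finset.sum_const, Finset.card_univ, mul_comm]
          _ = s * (∑ i, X i * ∑ j, A i j) + s * n := by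
              rw [Finset.sum_comm]
              congr 2
              refine Finset.sum_congr rfl fun i _ => ?_
              rw [Finset.mul_sum]
      linear_combination hcon0 - e1 - (s * (∑ i, X i * ∑ j, A i j) + s * n) * hchar
    have eXy : ∑ i, X i * y i = (1 + (n : S)) + ∑ i, X i * ∑ j, A i j := by
      simp only [hy, mul_add]
      rw [Finset.sum_add_distrib, hX]
    -- express z as a combination of the rows
    have hzeq : z = s • G none
        + ∑ i, (z (Sum.inr (Sum.inl i)) + s * X i) • G (some i) := by
      funext idx
      have expand : (s • G none
          + ∑ i, (z (Sum.inr (Sum.inl i)) + s * X i) • G (some i)) idx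
          = s * G none idx + ∑ i, (z (Sum.inr (Sum.inl i)) + s * X i) * G (some i) idx := by
        simp [Finset.sum_apply, Pi.add_apply, Pi.smul_apply, smul_eq_mul]
      rw [expand]
      rcases idx with f | jk
      · fin_cases f
        · -- coordinate (inl 0)
          simp only [hG, Option.elim, Sum.elim_inl, Fin.mk_zero, Fin.mk_one, Fin.isValue, Matrix.cons_val_zero, mul_one]
          have es : ∑ i, (z (Sum.inr (Sum.inl i)) + s * X i) * y i
              = (∑ i, z (Sum.inr (Sum.inl i)) * y i) + s * ∑ i, X i * y i := by
            rw [Finset.mul_sum, ← Finset.sum_add_distrib]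
            exact Finset.sum_congr rfl fun i _ => by ring
          rw [es, eXy]
          linear_combination -hm0 + hb'
            - ((∑ i, z (Sum.inr (Sum.inl i)) * y i) + s) * hchar
        · -- coordinate (inl 1)
          simp only [hG, Option.elim, Sum.elim_inl, Fin.mk_zero, Fin.mk_one, Fin.isValue, Matrix.cons_val_one, Matrix.head_cons,
            Matrix.cons_val_zero, mul_zero]
          have es : ∑ i, (z (Sum.inr (Sum.inl i)) + s * X i) * (c * y i)
              = (∑ i, z (Sum.inr (Sum.inl i)) * (c * y i)) + c * s * ∑ i, X i * y i := by
            rw [Finset.mul_sum, ← Finset.sum_add_distrib]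
            exact Finset.sum_congr rfl fun i _ => by ring
          rw [es, eXy]
          linear_combination -hm1 - c * hs - m (Sum.inl 1) * hc2 - c * hb'
            - ((∑ i, z (Sum.inr (Sum.inl i)) * (c * y i))
                + c * s * ((n : S) + ∑ i, X i * ∑ j, A i j)) * hchar
      · rcases jk with j | k
        · -- middle coordinates
          simp only [hG, Option.elim, Sum.elim_inl, Sum.elim_inr, mul_ite, mul_one, mul_zero,
            Finset.sum_ite_eq', Finset.mem_univ, if_true]
          linear_combination -(s * X j) * hchar
        · -- last block coordinates
          simp only [hG, Option.elim, Sum.elim_inl, Sum.elim_inr, mul_one]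
          have es : ∑ i, (z (Sum.inr (Sum.inl i)) + s * X i) * A i k
              = (∑ i, z (Sum.inr (Sum.inl i)) * A i k) + s * ∑ i, X i * A i k := by
            rw [Finset.mul_sum, ← Finset.sum_add_distrib]
            exact Finset.sum_congr rfl fun i _ => by ring
          rw [es]
          linear_combination -hmw k + hw k
            - (∑ i, z (Sum.inr (Sum.inl i)) * A i k) * hchar
    rw [hzeq]
    exact Submodule.add_mem _
      (Submodule.smul_mem _ _ (Submodule.subset_span ⟨none, rfl⟩))
      (Submodule.sum_mem _ fun i _ =>
        Submodule.smul_mem _ _ (Submodule.subset_span ⟨some i, rfl⟩))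

end
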